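/- There exists a continuous strictly increasing function F : ℝ → (0,1) and a constant d > 0 such that the system c = F(d(1-s)), s = F(d(1-c)) has at least three distinct solutions (c,s) ∈ [0,1]². -/
import Mathlib

open Real

lemma Fval (y : ℝ) (h : Real.arctan (4*y - 2) = y*π - π/2) :
    1/2 + (1/π) * Real.arctan (4*y - 2) = y := by
  rw [h]
  field_simp
  ring

/-- There exist a continuous strictly increasing `F : ℝ → (0,1)` and `d > 0` such that
the system `c = F(d(1-s))`, `s = F(d(1-c))` has at least three distinct solutions
`(c,s) ∈ [0,1]²`. -/
theorem stmt12 :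
    ∃ (F : ℝ → ℝ) (d : ℝ),
      Continuous F ∧ StrictMono F ∧ (∀ x : ℝ, F x ∈ Set.Ioo (0:ℝ) 1) ∧ 0 < d ∧
      ∃ p₁ p₂ p₃ : ℝ × ℝ,
        p₁ ≠ p₂ ∧ p₁ ≠ p₃ ∧ p₂ ≠ p₃ ∧
        (∀ p ∈ ({p₁, p₂, p₃} : Set (ℝ × ℝ)),
          p.1 ∈ Set.Icc (0:ℝ) 1 ∧ p.2 ∈ Set.Icc (0:ℝ) 1 ∧
          p.1 = F (d * (1 - p.2)) ∧ p.2 = F (d * (1 - p.1))) := by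
  have hπ : (0:ℝ) < π := Real.pi_pos
  refine ⟨fun x => 1/2 + (1/π) * Real.arctan (4*x - 2), 1, ?_, ?_, ?_, one_pos,
    (1/2, 1/2), (1/4, 3/4), (3/4, 1/4), by norm_num, by norm_num, by norm_num, ?_⟩
  · exact continuous_const.add (continuous_const.mul (Real.continuous_arctan.comp (by continuity)))
  · intro a b hab
    have : Real.arctan (4*a - 2) < Real.arctan (4*b - 2) :=
      Real.arctan_strictMono (by linarith)
    have h1 : 0 < 1/π := by positivity
    nlinarith
  · intro x
    have h1 := Real.arctan_lt_pi_div_two (4*x - 2)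
    have h2 := Real.neg_pi_div_two_lt_arctan (4*x - 2)
    constructor
    · show (0:ℝ) < 1/2 + (1/π) * Real.arctan (4*x-2)
      rw [show (1:ℝ)/2 + (1/π) * Real.arctan (4*x-2) = (π/2 + Real.arctan (4*x-2))/π by
        field_simp]
      exact div_pos (by linarith) hπ
    · show (1:ℝ)/2 + (1/π) * Real.arctan (4*x-2) < 1
      have : (1/π) * Real.arctan (4*x-2) < (1/π) * (π/2) := by
        apply mul_lt_mul_of_pos_left h1 (by positivity)
      rw [show (1/π) * (π/2) = (1:ℝ)/2 by field_simp] at this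
      linarith
  · intro p hp
    have e1 : Real.arctan (4*((1:ℝ)/2) - 2) = (1/2)*π - π/2 := by
      rw [show 4*((1:ℝ)/2) - 2 = 0 by norm_num, Real.arctan_zero]; ring
    have e2 : Real.arctan (4*((1:ℝ)/4) - 2) = (1/4)*π - π/2 := by
      rw [show 4*((1:ℝ)/4) - 2 = -1 by norm_num, Real.arctan_neg, Real.arctan_one]; ring
    have e3 : Real.arctan (4*((3:ℝ)/4) - 2) = (3/4)*π - π/2 := by
      rw [show 4*((3:ℝ)/4) - 2 = 1 by norm_num, Real.arctan_one]; ring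
    rcases hp with rfl | rfl | rfl <;>
      refine ⟨by norm_num, by norm_num, ?_, ?_⟩ <;> simp only
    · rw [show (1:ℝ) * (1 - 1/2) = 1/2 by norm_num, Fval _ e1]
    · rw [show (1:ℝ) * (1 - 1/2) = 1/2 by norm_num, Fval _ e1]
    · rw [show (1:ℝ) * (1 - 3/4) = 1/4 by norm_num, Fval _ e2]
    · rw [show (1:ℝ) * (1 - 1/4) = 3/4 by norm_num, Fval _ e3]
    · rw [show (1:ℝ) * (1 - 1/4) = 3/4 by norm_num, Fval _ e3]
    · rw [show (1:ℝ) * (1 - 3/4) = 1/4 by norm_num, Fval _ e2]
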